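/- arXiv:1501.07084 — 6 statements merged into one kernel-verified Lean document; each statement's English description precedes it below -/
import Mathlib

section
/- Let k ≥ 2, α > 0, β > 0, and U_1, …, U_{k-1} be reals with 0 < U_i ≤ 1. Suppose C > 0, t_k > 0, and C/t_k ≤ (α/β + 1)/∏_{j=1}^{k-1}(β U_j + 1) − α/β. Then for any reals t_1, …, t_{k-1} ≥ 0, there exists an index j ∈ {1,…,k} such that C + α ∑_{i=1}^{k-1} t_i U_i + β ∑_{i=1}^{j-1} t_i U_i ≤ t_j (where t_k is the given value and empty sums are 0). -/
/-- k2U Lemma 1 (hyperbolic bound): if `C / t_k` satisfies the hyperbolic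
condition then at least one of the `k` test points succeeds. -/
theorem stmt_0 (k : ℕ) (hk : 2 ≤ k) (α β : ℝ) (hα : 0 < α) (hβ : 0 < β)
    (U : ℕ → ℝ) (hU : ∀ i ∈ Finset.range (k - 1), 0 < U i ∧ U i ≤ 1)
    (C : ℝ) (hC : 0 < C)
    (t : ℕ → ℝ) (htk : 0 < t (k - 1))
    (hcond : C / t (k - 1) ≤
      (α / β + 1) / (∏ j ∈ Finset.range (k - 1), (β * U j + 1)) - α / β)
    (ht : ∀ i ∈ Finset.range (k - 1), 0 ≤ t i) :
    ∃ j ∈ Finset.range k,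
      C + α * ∑ i ∈ Finset.range (k - 1), t i * U i
        + β * ∑ i ∈ Finset.range j, t i * U i ≤ t j := by
  by_contra hcon
  push_neg at hcon
  set n := k - 1 with hn
  have hnk : n < k := by omega
  set S := ∑ i ∈ Finset.range n, t i * U i with hS
  set P := ∏ j ∈ Finset.range n, (β * U j + 1) with hP
  have hSnn : 0 ≤ S :=
    Finset.sum_nonneg fun i hi => mul_nonneg (ht i hi) (le_of_lt (hU i hi).1)
  have hD : 0 < C + α * S := by nlinarith
  have hPpos : 0 < P := Finset.prod_pos fun i hi => by nlinarith [(hU i hi).1]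
  have key : ∀ j, j ≤ n → C + α * S + β * ∑ i ∈ Finset.range j, t i * U i
      ≤ (C + α * S) * ∏ i ∈ Finset.range j, (β * U i + 1) := by
    intro j hj
    induction j with
    | zero => simp
    | succ j ih =>
      have hjn : j < n := hj
      have ihj := ih (le_of_lt hjn)
      have hUj := hU j (Finset.mem_range.mpr hjn)
      have htj := ht j (Finset.mem_range.mpr hjn)
      have hneg := hcon j (Finset.mem_range.mpr (lt_trans hjn hnk))
      have hPj : (0:ℝ) ≤ ∏ i ∈ Finset.range j, (β * U i + 1) :=
        Finset.prod_nonneg fun i hi => by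
          have := (hU i (Finset.mem_range.mpr (lt_trans (Finset.mem_range.mp hi) hjn))).1
          nlinarith
      rw [Finset.sum_range_succ, Finset.prod_range_succ]
      have htle : t j ≤ (C + α * S) * ∏ i ∈ Finset.range j, (β * U i + 1) :=
        le_trans hneg.le ihj
      have hmul : β * U j * t j ≤
          β * U j * ((C + α * S) * ∏ i ∈ Finset.range j, (β * U i + 1)) :=
        mul_le_mul_of_nonneg_left htle (mul_nonneg hβ.le hUj.1.le)
      nlinarith [hmul, ihj]
  have hkey := key n le_rfl
  have hneg := hcon n (Finset.mem_range.mpr hnk)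
  rw [← hS] at hkey hneg
  rw [← hP] at hkey
  have hx : (α / β + 1) / P - α / β = ((α + β) - α * P) / (β * P) := by
    field_simp
  rw [hx, div_le_div_iff₀ htk (by positivity)] at hcond
  -- hcond : C * (β * P) ≤ ((α + β) - α * P) * t n
  have hE : 0 < (α + β) - α * P := by nlinarith [mul_pos (mul_pos hC hβ) hPpos]
  have hA := mul_lt_mul_of_pos_right hneg hE
  have hB := mul_le_mul_of_nonneg_left hkey (add_pos hα hβ).le
  nlinarith [hA, hB, hcond]
end

section
/- Let k ≥ 2, α > 0, β > 0, c ≥ 0 with c + α/β > 0, and U_1, …, U_{k-1} ≥ 0. If β ∑_{i=1}^{k-1} U_i ≤ ln((α/β + 1)/(c + α/β)), then c ≤ (α/β + 1)/∏_{j=1}^{k-1}(β U_j + 1) − α/β. -/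
theorem stmt_4 (k : ℕ) (hk : 2 ≤ k) (α β c : ℝ) (hα : 0 < α) (hβ : 0 < β)
    (hc : 0 ≤ c) (hcαβ : 0 < c + α / β)
    (U : ℕ → ℝ) (hU : ∀ i ∈ Finset.range (k - 1), 0 ≤ U i)
    (h : β * ∑ i ∈ Finset.range (k - 1), U i ≤
      Real.log ((α / β + 1) / (c + α / β))) :
    c ≤ (α / β + 1) / (∏ j ∈ Finset.range (k - 1), (β * U j + 1)) - α / β := by
  set s := Finset.range (k - 1)
  have hPpos : 0 < ∏ j ∈ s, (β * U j + 1) :=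
    Finset.prod_pos fun j hj => by nlinarith [hU j hj]
  have hprod_le : ∏ j ∈ s, (β * U j + 1) ≤ Real.exp (β * ∑ i ∈ s, U i) := by
    rw [Finset.mul_sum, Real.exp_sum]
    exact Finset.prod_le_prod (fun j hj => by nlinarith [hU j hj])
      (fun j hj => Real.add_one_le_exp (β * U j))
  have hR : Real.exp (β * ∑ i ∈ s, U i) ≤ (α / β + 1) / (c + α / β) := by
    have hsum : 0 ≤ β * ∑ i ∈ s, U i :=
      mul_nonneg hβ.le (Finset.sum_nonneg hU)
    have hlog : 0 ≤ Real.log ((α / β + 1) / (c + α / β)) := le_trans hsum h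
    have hRpos : 0 < (α / β + 1) / (c + α / β) :=
      div_pos (by positivity) hcαβ
    calc Real.exp (β * ∑ i ∈ s, U i)
        ≤ Real.exp (Real.log ((α / β + 1) / (c + α / β))) := Real.exp_le_exp.mpr h
      _ = _ := Real.exp_log hRpos
  have key : (∏ j ∈ s, (β * U j + 1)) * (c + α / β) ≤ α / β + 1 := by
    have := mul_le_mul (hprod_le.trans hR) (le_refl (c + α / β)) hcαβ.le
      (by positivity : (0:ℝ) ≤ (α / β + 1) / (c + α / β))
    calc (∏ j ∈ s, (β * U j + 1)) * (c + α / β)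
        ≤ (α / β + 1) / (c + α / β) * (c + α / β) := this
      _ = α / β + 1 := div_mul_cancel₀ _ hcαβ.ne'
  have := (le_div_iff₀ hPpos).mpr (by linarith [key] : (c + α / β) * (∏ j ∈ s, (β * U j + 1)) ≤ α / β + 1)
  linarith
end

section
/- Let k ≥ 2, and for i = 1, …, k−1 let α_i > 0, β_i > 0, 0 < U_i ≤ 1. Suppose C > 0, t_k > 0 and C/t_k ≤ 1 − ∑_{i=1}^{k-1} U_i(α_i + β_i)/∏_{j=i}^{k-1}(β_j U_j + 1). Then for all reals t_1, …, t_{k-1} ≥ 0, there exists j ∈ {1,…,k} with C + ∑_{i=1}^{k-1} α_i t_i U_i + ∑_{i=1}^{j-1} β_i t_i U_i ≤ t_j (with t_k the given value). -/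
/-- k2U Lemma 4 (general, per-task coefficients). -/
theorem stmt_8 (k : ℕ) (hk : 2 ≤ k) (α β U : ℕ → ℝ)
    (hα : ∀ i ∈ Finset.range (k - 1), 0 < α i)
    (hβ : ∀ i ∈ Finset.range (k - 1), 0 < β i)
    (hU : ∀ i ∈ Finset.range (k - 1), 0 < U i ∧ U i ≤ 1)
    (C : ℝ) (hC : 0 < C)
    (t : ℕ → ℝ) (htk : 0 < t (k - 1))
    (hcond : C / t (k - 1) ≤
      1 - ∑ i ∈ Finset.range (k - 1),
            U i * (α i + β i) / ∏ j ∈ Finset.Ico i (k - 1), (β j * U j + 1))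
    (ht : ∀ i ∈ Finset.range (k - 1), 0 ≤ t i) :
    ∃ j ∈ Finset.range k,
      C + ∑ i ∈ Finset.range (k - 1), α i * t i * U i
        + ∑ i ∈ Finset.range j, β i * t i * U i ≤ t j := by
  by_contra hcon
  push_neg at hcon
  set n := k - 1 with hn
  have hkn : k = n + 1 := by omega
  have hn1 : 1 ≤ n := by omega
  set Q : ℕ → ℝ := fun j => ∏ i ∈ Finset.range j, (β i * U i + 1) with hQ
  have hfac : ∀ i ∈ Finset.range n, (0:ℝ) < β i * U i + 1 := by
    intro i hi
    have h1 := hβ i hi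
    have h2 := (hU i hi).1
    nlinarith
  have hQpos : ∀ j, j ≤ n → 0 < Q j := by
    intro j hj
    apply Finset.prod_pos
    intro i hi
    exact hfac i (Finset.mem_range.mpr (lt_of_lt_of_le (Finset.mem_range.mp hi) hj))
  set A := ∑ i ∈ Finset.range n, α i * t i * U i with hA
  have hApos : 0 ≤ A := by
    apply Finset.sum_nonneg
    intro i hi
    have h1 := hα i hi
    have h2 := (hU i hi).1
    have h3 := ht i hi
    positivity
  have hXpos : 0 < C + A := by linarith
  have key : ∀ j, j ≤ n → C + A + ∑ i ∈ Finset.range j, β i * t i * U i ≤ (C + A) * Q j := by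
    intro j
    induction j with
    | zero => intro _; simp [hQ]
    | succ m ih =>
      intro hm
      have hm' : m ≤ n := Nat.le_of_succ_le hm
      have h1 := ih hm'
      have hmem : m ∈ Finset.range n := Finset.mem_range.mpr (by omega)
      have htm : t m < C + A + ∑ i ∈ Finset.range m, β i * t i * U i := by
        have := hcon m (Finset.mem_range.mpr (by omega))
        linarith [this]
      have htm2 : t m ≤ (C + A) * Q m := le_of_lt (lt_of_lt_of_le htm h1)
      have hbu : 0 < β m * U m := mul_pos (hβ m hmem) (hU m hmem).1
      have hQm := hQpos m hm'
      have hQs : Q (m + 1) = Q m * (β m * U m + 1) := Finset.prod_range_succ _ _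
      rw [Finset.sum_range_succ, hQs]
      nlinarith [mul_le_mul_of_nonneg_left htm2 (le_of_lt hbu)]
  have htlt : ∀ j, j ≤ n → t j < (C + A) * Q j := by
    intro j hj
    refine lt_of_lt_of_le ?_ (key j hj)
    have := hcon j (Finset.mem_range.mpr (by omega))
    linarith
  set T := ∑ i ∈ Finset.range n, α i * U i * Q i with hT
  have hTA : A < (C + A) * T := by
    rw [hA, hT, Finset.mul_sum]
    apply Finset.sum_lt_sum_of_nonempty
    · exact Finset.nonempty_range_iff.mpr (by omega)
    · intro i hi
      have hi' := Finset.mem_range.mp hi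
      have h1 := htlt i (le_of_lt hi')
      have h2 := mul_pos (hα i hi) (hU i hi).1
      calc α i * t i * U i = (α i * U i) * t i := by ring
        _ < (α i * U i) * ((C + A) * Q i) := mul_lt_mul_of_pos_left h1 h2
        _ = (C + A) * (α i * U i * Q i) := by ring
  have hmain : (C + A) * (1 - T) < C := by nlinarith
  have htel : ∑ i ∈ Finset.range n, β i * U i * Q i = Q n - 1 := by
    have h0 : Q 0 = 1 := by simp [hQ]
    calc ∑ i ∈ Finset.range n, β i * U i * Q i
        = ∑ i ∈ Finset.range n, (Q (i+1) - Q i) := by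
          apply Finset.sum_congr rfl
          intro i _
          have h : Q (i+1) = Q i * (β i * U i + 1) := Finset.prod_range_succ _ _
          rw [h]; ring
      _ = Q n - Q 0 := Finset.sum_range_sub Q n
      _ = Q n - 1 := by rw [h0]
  have hQn := hQpos n le_rfl
  have hS : ∑ i ∈ Finset.range n, U i * (α i + β i) / ∏ j ∈ Finset.Ico i n, (β j * U j + 1)
      = (T + (Q n - 1)) / Q n := by
    rw [← htel, hT, ← Finset.sum_add_distrib, Finset.sum_div]
    apply Finset.sum_congr rfl
    intro i hi
    have hi' := Finset.mem_range.mp hi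
    have hprod : Q i * ∏ j ∈ Finset.Ico i n, (β j * U j + 1) = Q n :=
      Finset.prod_range_mul_prod_Ico _ (le_of_lt hi')
    have hIpos : 0 < ∏ j ∈ Finset.Ico i n, (β j * U j + 1) := by
      apply Finset.prod_pos
      intro j hj
      exact hfac j (Finset.mem_range.mpr (Finset.mem_Ico.mp hj).2)
    have hQi := hQpos i (le_of_lt hi')
    rw [← hprod, div_eq_div_iff hIpos.ne' (by positivity)]
    ring
  rw [hS, div_le_iff₀ htk] at hcond
  have heq : 1 - (T + (Q n - 1)) / Q n = (1 - T) / Q n := by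
    field_simp; ring
  rw [heq] at hcond
  rcases le_or_gt (1 - T) 0 with hT1 | hT1
  · have h6 : (1 - T) / Q n ≤ 0 := div_nonpos_of_nonpos_of_nonneg hT1 (le_of_lt hQn)
    nlinarith
  · have h5 : t n < (C + A) * Q n := htlt n le_rfl
    have h7 : (1 - T) / Q n * t n < (1 - T) / Q n * ((C + A) * Q n) :=
      mul_lt_mul_of_pos_left h5 (div_pos hT1 hQn)
    have e : (1 - T) / Q n * ((C + A) * Q n) = (C + A) * (1 - T) := by
      field_simp
    rw [e] at h7
    linarith
end

section
/- Let ℓ ≥ 2 and let α_i > 0, β_i > 0, U_i > 0 for i = 1, …, ℓ−1, with α_ℓ > 0, β_ℓ > 0, U_ℓ > 0 as well. If ∑_{i=1}^{ℓ-1} U_i(α_i + β_i)/∏_{j=i}^{ℓ-1}(β_j U_j + 1) ≥ 1, then for any k > ℓ and any further α_i, β_i > 0, U_i > 0 for ℓ ≤ i ≤ k−1, one has ∑_{i=1}^{k-1} U_i(α_i + β_i)/∏_{j=i}^{k-1}(β_j U_j + 1) ≥ 1. -/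
theorem stmt_9 (ℓ k : ℕ) (hℓ : 2 ≤ ℓ) (hk : ℓ < k) (α β U : ℕ → ℝ)
    (hα : ∀ i ∈ Finset.range (k - 1), 0 < α i)
    (hβ : ∀ i ∈ Finset.range (k - 1), 0 < β i)
    (hU : ∀ i ∈ Finset.range (k - 1), 0 < U i)
    (hpre : 1 ≤ ∑ i ∈ Finset.range (ℓ - 1),
        U i * (α i + β i) / ∏ j ∈ Finset.Ico i (ℓ - 1), (β j * U j + 1)) :
    1 ≤ ∑ i ∈ Finset.range (k - 1),
        U i * (α i + β i) / ∏ j ∈ Finset.Ico i (k - 1), (β j * U j + 1) := by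
  set S : ℕ → ℝ := fun m => ∑ i ∈ Finset.range m,
      U i * (α i + β i) / ∏ j ∈ Finset.Ico i m, (β j * U j + 1) with hS
  -- main claim by induction
  have main : ∀ m, ℓ - 1 ≤ m → (m ≤ k - 1 → 1 ≤ S m) := by
    intro m hm
    induction m, hm using Nat.le_induction with
    | base => intro _; exact hpre
    | succ m hm ih =>
      intro hmk
      have hmk' : m < k - 1 := by omega
      have hmem : m ∈ Finset.range (k - 1) := Finset.mem_range.mpr hmk'
      have hβm := hβ m hmem
      have hUm := hU m hmem
      have hαm := hα m hmem
      have hc : (0:ℝ) < β m * U m + 1 := by positivity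
      have hSm : 1 ≤ S m := ih (by omega)
      have hstep : S (m + 1) = (S m + U m * (α m + β m)) / (β m * U m + 1) := by
        simp only [hS]
        rw [Finset.sum_range_succ]
        have h1 : ∀ i ∈ Finset.range m,
            U i * (α i + β i) / ∏ j ∈ Finset.Ico i (m + 1), (β j * U j + 1)
            = (U i * (α i + β i) / ∏ j ∈ Finset.Ico i m, (β j * U j + 1)) / (β m * U m + 1) := by
          intro i hi
          have hi' : i ≤ m := le_of_lt (Finset.mem_range.mp hi)
          rw [Finset.prod_Ico_succ_top hi', div_div]
        rw [Finset.sum_congr rfl h1, ← Finset.sum_div]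
        have : ∏ j ∈ Finset.Ico m (m + 1), (β j * U j + 1) = β m * U m + 1 := by
          simp
        rw [this, ← add_div]
      rw [hstep, le_div_iff₀ hc]
      nlinarith
  have := main (k - 1) (by omega) (le_refl _)
  exact this
end

section
/- Minimize c + (k−1)·U over reals c ≥ 0, U ≥ 0 subject to the constraint (c + α/β)(β U + 1)^{k-1} ≥ α/β + 1, where k ≥ 2, α > 0, β > 0 with 1 ≤ (α+β)^{1/k} and α ≤ (α+β)^{1/k}. The minimum value equals ((k−1)((α+β)^{1/k} − 1) + ((α+β)^{1/k} − α))/β, attained at U = ((α+β)^{1/k} − 1)/β and c = ((α+β)^{1/k} − α)/β. -/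
theorem stmt_16 (k : ℕ) (hk : 2 ≤ k) (α β : ℝ) (hα : 0 < α) (hβ : 0 < β)
    (h1 : 1 ≤ (α + β) ^ ((1 : ℝ) / k)) (h2 : α ≤ (α + β) ^ ((1 : ℝ) / k)) :
    IsLeast
      {v : ℝ | ∃ c U : ℝ, 0 ≤ c ∧ 0 ≤ U ∧
        α / β + 1 ≤ (c + α / β) * (β * U + 1) ^ (k - 1) ∧
        v = c + ((k : ℝ) - 1) * U}
      ((((k : ℝ) - 1) * ((α + β) ^ ((1 : ℝ) / k) - 1)
          + ((α + β) ^ ((1 : ℝ) / k) - α)) / β)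
    ∧ ((α + β) ^ ((1 : ℝ) / k) - α) / β
        + ((k : ℝ) - 1) * (((α + β) ^ ((1 : ℝ) / k) - 1) / β)
      = (((k : ℝ) - 1) * ((α + β) ^ ((1 : ℝ) / k) - 1)
          + ((α + β) ^ ((1 : ℝ) / k) - α)) / β
    ∧ α / β + 1 ≤ (((α + β) ^ ((1 : ℝ) / k) - α) / β + α / β)
        * (β * (((α + β) ^ ((1 : ℝ) / k) - 1) / β) + 1) ^ (k - 1) := by
  set t := (α + β) ^ ((1 : ℝ) / k) with ht
  have hab : (0 : ℝ) < α + β := by linarith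
  have hk0 : (k : ℝ) ≠ 0 := by positivity
  have hkpos : (0 : ℝ) < k := by positivity
  have ht0 : 0 < t := by positivity
  have htk : t ^ k = α + β := by
    rw [ht, ← Real.rpow_natCast ((α + β) ^ ((1 : ℝ) / k)) k, ← Real.rpow_mul hab.le,
      one_div, inv_mul_cancel₀ hk0, Real.rpow_one]
  have hkcast : ((k - 1 : ℕ) : ℝ) = (k : ℝ) - 1 := by
    have : (1 : ℕ) ≤ k := by omega
    push_cast [this]; ring
  -- the point satisfies the constraint with equality
  have hpt : (t / β) * t ^ (k - 1) = α / β + 1 := by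
    have : (t / β) * t ^ (k - 1) = t ^ k / β := by
      rw [div_mul_eq_mul_div, ← pow_succ']
      congr 2
      omega
    rw [this, htk]
    field_simp
  -- lower bound
  have hlb : ∀ c U : ℝ, 0 ≤ c → 0 ≤ U →
      α / β + 1 ≤ (c + α / β) * (β * U + 1) ^ (k - 1) →
      (((k : ℝ) - 1) * (t - 1) + (t - α)) / β ≤ c + ((k : ℝ) - 1) * U := by
    intro c U hc hU hcon
    set x := c + α / β with hx
    set y := U + 1 / β with hy
    have hx0 : 0 < x := by have := div_pos hα hβ; simp only [hx]; linarith
    have hy0 : 0 < y := by have := one_div_pos.mpr hβ; simp only [hy]; linarith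
    have hcon2 : (α + β) / β ^ k ≤ x * y ^ (k - 1) := by
      have hrw : (c + α / β) * (β * U + 1) ^ (k - 1) = x * (β * y) ^ (k - 1) := by
        have : β * U + 1 = β * y := by rw [hy]; field_simp
        rw [this]
      rw [hrw, mul_pow] at hcon
      rw [div_le_iff₀ (by positivity)]
      have hb : β ^ k = β * β ^ (k - 1) := by
        rw [← pow_succ']; congr 1; omega
      have hcon3 : α + β ≤ (c + α / β) * (β ^ (k-1) * y ^ (k-1)) * β := by
        have := mul_le_mul_of_nonneg_right hcon hβ.le
        calc α + β = (α / β + 1) * β := by field_simp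
          _ ≤ _ := this
      calc α + β ≤ (c + α / β) * (β ^ (k-1) * y ^ (k-1)) * β := hcon3
        _ = x * y ^ (k - 1) * β ^ k := by rw [hb, ← hx]; ring
    -- AM-GM
    have hgm := Real.geom_mean_le_arith_mean2_weighted
      (w₁ := 1 / k) (w₂ := ((k : ℝ) - 1) / k) (p₁ := x) (p₂ := y)
      (by positivity) (by
        apply div_nonneg _ hkpos.le
        have : (2 : ℝ) ≤ k := by exact_mod_cast hk
        linarith) hx0.le hy0.le (by field_simp; ring)
    have hroot : t / β ≤ x ^ ((1:ℝ)/k) * y ^ (((k:ℝ)-1)/k) := by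
      have h := Real.rpow_le_rpow (by positivity) hcon2 (by positivity : (0:ℝ) ≤ 1/k)
      have hL : ((α + β) / β ^ k) ^ ((1:ℝ)/k) = t / β := by
        rw [Real.div_rpow hab.le (by positivity), ← ht,
          ← Real.rpow_natCast β k, ← Real.rpow_mul hβ.le, mul_one_div,
          div_self hk0, Real.rpow_one]
      have hR : (x * y ^ (k - 1)) ^ ((1:ℝ)/k)
          = x ^ ((1:ℝ)/k) * y ^ (((k:ℝ)-1)/k) := by
        rw [Real.mul_rpow hx0.le (by positivity),
          ← Real.rpow_natCast y (k - 1), ← Real.rpow_mul hy0.le,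
          hkcast, mul_one_div]
      rw [hL, hR] at h
      exact h
    have hfin : t / β ≤ 1 / k * x + ((k:ℝ)-1)/k * y := le_trans hroot hgm
    have hmul : (k : ℝ) * (t / β) ≤ x + ((k:ℝ)-1) * y := by
      have := mul_le_mul_of_nonneg_left hfin hkpos.le
      calc (k:ℝ) * (t / β) ≤ (k:ℝ) * (1 / k * x + ((k:ℝ)-1)/k * y) := this
        _ = x + ((k:ℝ)-1) * y := by field_simp
    have hId : x + ((k:ℝ)-1) * y = c + ((k:ℝ)-1) * U + (α + ((k:ℝ)-1)) / β := by
      rw [hx, hy]; field_simp; ring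
    have hId2 : (((k : ℝ) - 1) * (t - 1) + (t - α)) / β
        = (k:ℝ) * (t / β) - (α + ((k:ℝ)-1)) / β := by
      field_simp; ring
    linarith [hmul, hId ▸ hmul]
  refine ⟨⟨⟨(t - α) / β, (t - 1) / β, div_nonneg (by linarith) hβ.le, div_nonneg (by linarith) hβ.le, ?_, by ring⟩, ?_⟩,
    by ring, ?_⟩
  · have e1 : (t - α) / β + α / β = t / β := by ring
    have e2 : β * ((t - 1) / β) + 1 = t := by field_simp; ring
    rw [e1, e2, hpt]
  · rintro v ⟨c, U, hc, hU, hcon, rfl⟩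
    exact hlb c U hc hU hcon
  · have e1 : (t - α) / β + α / β = t / β := by ring
    have e2 : β * ((t - 1) / β) + 1 = t := by field_simp; ring
    rw [e1, e2, hpt]
end

section
/- Let k ≥ 2, β > 0, and T > 0 (a fixed target). Among all c ≥ 0 and U_1,…,U_{k-1} ≥ 0 with c + ∑ U_i ≤ ((k−1)((α+β)^{1/k}−1) + ((α+β)^{1/k}−α))/β, where α > 0 and 1 ≤ (α+β)^{1/k}, α ≤ (α+β)^{1/k}, the hyperbolic condition c ≤ (α/β+1)/∏_{j=1}^{k-1}(βU_j+1) − α/β holds. -/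
theorem stmt_17 (k : ℕ) (hk : 2 ≤ k) (α β T : ℝ) (hα : 0 < α) (hβ : 0 < β)
    (hT : 0 < T)
    (h1 : 1 ≤ (α + β) ^ ((1 : ℝ) / k)) (h2 : α ≤ (α + β) ^ ((1 : ℝ) / k))
    (c : ℝ) (hc : 0 ≤ c)
    (U : ℕ → ℝ) (hU : ∀ i ∈ Finset.range (k - 1), 0 ≤ U i)
    (hsum : c + ∑ i ∈ Finset.range (k - 1), U i ≤
      (((k : ℝ) - 1) * ((α + β) ^ ((1 : ℝ) / k) - 1)
        + ((α + β) ^ ((1 : ℝ) / k) - α)) / β) :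
    c ≤ (α / β + 1) / (∏ j ∈ Finset.range (k - 1), (β * U j + 1)) - α / β := by
  have hkne : (k : ℝ) ≠ 0 := Nat.cast_ne_zero.mpr (by omega)
  have hkpos : (0:ℝ) < k := by positivity
  have hab : 0 < α + β := by linarith
  set x := (α + β) ^ ((1:ℝ)/k) with hxdef
  have hx0 : 0 ≤ x := le_trans zero_le_one h1
  have hxk : x ^ (k:ℕ) = α + β := by
    rw [hxdef, ← Real.rpow_natCast ((α+β)^((1:ℝ)/k)) k, ← Real.rpow_mul hab.le,
      one_div, inv_mul_cancel₀ hkne, Real.rpow_one]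
  set P := ∏ j ∈ Finset.range (k-1), (β * U j + 1) with hPdef
  have hP1 : 1 ≤ P := by
    calc (1:ℝ) = ∏ _j ∈ Finset.range (k-1), (1:ℝ) := by simp
      _ ≤ ∏ j ∈ Finset.range (k-1), (β * U j + 1) :=
          Finset.prod_le_prod (by intros; norm_num)
            (fun i hi => by nlinarith [hU i hi, hβ])
  have hPpos : 0 < P := lt_of_lt_of_le zero_lt_one hP1
  -- the main inequality: (β c + α) * P ≤ α + β
  set z : ℕ → ℝ := fun i => if i = 0 then β*c+α else β * U (i-1) + 1 with hzdef
  have hz : ∀ i ∈ Finset.range k, 0 ≤ z i := by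
    intro i hi
    simp only [hzdef]
    split
    · nlinarith
    · rename_i h
      have : i - 1 ∈ Finset.range (k-1) := by
        simp only [Finset.mem_range] at hi ⊢; omega
      nlinarith [hU (i-1) this]
  have hsumz : ∑ i ∈ Finset.range k, z i ≤ (k:ℝ) * x := by
    have hk1 : k = (k-1) + 1 := by omega
    rw [hk1, Finset.sum_range_succ']
    have heq : ∀ i ∈ Finset.range (k-1), z (i+1) = β * U i + 1 := by
      intro i _; simp [hzdef]
    rw [Finset.sum_congr rfl heq, Finset.sum_add_distrib, ← Finset.mul_sum]
    simp only [hzdef, if_pos rfl, Finset.sum_const, Finset.card_range, nsmul_eq_mul,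
      mul_one]
    have hcast : ((k-1 : ℕ) : ℝ) = (k:ℝ) - 1 := by
      rw [Nat.cast_sub (by omega : 1 ≤ k)]; norm_num
    rw [hcast]
    have h' : β * (c + ∑ i ∈ Finset.range (k-1), U i) ≤
        ((k:ℝ)-1)*(x-1) + (x-α) := by
      rw [← le_div_iff₀' hβ]; exact hsum
    have hcast2 : ((k-1+1:ℕ):ℝ) = (k:ℝ) := by rw [← hk1]
    rw [hcast2]
    linarith [h']
  have hprodz : ∏ i ∈ Finset.range k, z i = (β*c+α) * P := by
    have hk1 : k = (k-1) + 1 := by omega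
    rw [hk1, Finset.prod_range_succ']
    have heq : ∀ i ∈ Finset.range (k-1), z (i+1) = β * U i + 1 := by
      intro i _; simp [hzdef]
    rw [Finset.prod_congr rfl heq]
    simp [hzdef, mul_comm, hPdef]
  have hamgm : ∏ i ∈ Finset.range k, z i ^ ((1:ℝ)/k) ≤
      ∑ i ∈ Finset.range k, (1/(k:ℝ)) * z i := by
    apply Real.geom_mean_le_arith_mean_weighted
    · intro i _; positivity
    · simp [Finset.sum_const, Finset.card_range]
      field_simp
    · exact hz
  have hL : ∏ i ∈ Finset.range k, z i ^ ((1:ℝ)/k)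
      = (∏ i ∈ Finset.range k, z i) ^ ((1:ℝ)/k) := by
    rw [← Real.finset_prod_rpow _ _ hz]
  have hR : ∑ i ∈ Finset.range k, (1/(k:ℝ)) * z i ≤ x := by
    rw [← Finset.mul_sum]
    calc (1/(k:ℝ)) * ∑ i ∈ Finset.range k, z i
        ≤ (1/(k:ℝ)) * ((k:ℝ) * x) := by
          apply mul_le_mul_of_nonneg_left hsumz (by positivity)
      _ = x := by field_simp
  have hkey : (β*c+α) * P ≤ α + β := by
    have hPz : 0 ≤ ∏ i ∈ Finset.range k, z i := Finset.prod_nonneg hz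
    have h3 : (∏ i ∈ Finset.range k, z i) ^ ((1:ℝ)/k) ≤ x := by
      rw [← hL]; exact le_trans hamgm hR
    have h4 : ((∏ i ∈ Finset.range k, z i) ^ ((1:ℝ)/k)) ^ (k:ℕ) ≤ x ^ (k:ℕ) :=
      pow_le_pow_left₀ (by positivity) h3 k
    rw [← Real.rpow_natCast ((∏ i ∈ Finset.range k, z i) ^ ((1:ℝ)/k)) k,
      ← Real.rpow_mul hPz, one_div, inv_mul_cancel₀ hkne, Real.rpow_one, hxk,
      hprodz] at h4
    exact h4
  -- conclude
  rw [le_sub_iff_add_le, ← sub_nonneg]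
  have : (α / β + 1) / P - (c + α/β) = ((α + β) - (β*c+α)*P) / (β * P) := by
    field_simp
  rw [this]
  apply div_nonneg (by linarith) (by positivity)
end
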